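/- The dual-norm distance from t̄ to the polytope C admits the minimax representation λ# = min_{t ∈ C} N#(t̄ − t) = max{ min_{1 ≤ j ≤ n} ⟨Δ, t̄ − t_j⟩ : Δ ∈ ℝ^k, N(Δ) ≤ 1 }, where both the minimum over C and the maximum over the closed unit ball of N are attained. -/

import Mathlib

open scoped RealInnerProductSpace

/-- The dual norm `N#(v) = sup { ⟪Δ, v⟫ : N(Δ) ≤ 1 }` of a norm `N` on `ℝ^k`. -/
noncomputable def dualNorm {k : ℕ} (N : EuclideanSpace ℝ (Fin k) → ℝ)
    (v : EuclideanSpace ℝ (Fin k)) : ℝ :=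
  sSup ((fun Δ : EuclideanSpace ℝ (Fin k) => ⟪Δ, v⟫) '' {Δ | N Δ ≤ 1})


section aux
variable {k : ℕ} {N : EuclideanSpace ℝ (Fin k) → ℝ}

lemma coord_le_norm (x : EuclideanSpace ℝ (Fin k)) (i : Fin k) : |x i| ≤ ‖x‖ := by
  rw [EuclideanSpace.norm_eq, ← Real.sqrt_sq_eq_abs]
  apply Real.sqrt_le_sqrt
  have := Finset.single_le_sum (f := fun j => ‖x j‖ ^ 2) (fun j _ => sq_nonneg _)
    (Finset.mem_univ i)
  simpa [Real.norm_eq_abs, sq_abs] using this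

lemma N_zero' (hN_smul : ∀ (c : ℝ) (x), N (c • x) = |c| * N x) : N 0 = 0 := by
  have := hN_smul 0 0; simpa using this

lemma N_nonneg (hN_add : ∀ x y, N (x + y) ≤ N x + N y)
    (hN_smul : ∀ (c : ℝ) (x), N (c • x) = |c| * N x) (x : EuclideanSpace ℝ (Fin k)) :
    0 ≤ N x := by
  have h1 : N ((-1 : ℝ) • x) = N x := by rw [hN_smul]; simp
  have h2 := hN_add x ((-1 : ℝ) • x)
  have h3 : x + (-1 : ℝ) • x = 0 := by module
  rw [h3, h1, N_zero' hN_smul] at h2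
  linarith

lemma N_upper (hN_add : ∀ x y, N (x + y) ≤ N x + N y)
    (hN_smul : ∀ (c : ℝ) (x), N (c • x) = |c| * N x) :
    ∃ Cu : ℝ, 0 ≤ Cu ∧ ∀ x, N x ≤ Cu * ‖x‖ := by
  refine ⟨∑ i, N (EuclideanSpace.single i (1 : ℝ)), Finset.sum_nonneg fun i _ =>
    N_nonneg hN_add hN_smul _, fun x => ?_⟩
  have hx : x = ∑ i, x i • EuclideanSpace.single i (1 : ℝ) := by
    ext j
    rw [WithLp.ofLp_sum, Finset.sum_apply]
    simp [EuclideanSpace.single_apply, Finset.sum_ite_eq']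
  calc N x ≤ ∑ i, N (x i • EuclideanSpace.single i (1 : ℝ)) := by
        conv_lhs => rw [hx]
        exact Finset.le_sum_of_subadditive N (N_zero' hN_smul).le hN_add _ _
    _ ≤ ∑ i, ‖x‖ * N (EuclideanSpace.single i (1 : ℝ)) := by
        refine Finset.sum_le_sum fun i _ => ?_
        rw [hN_smul]
        exact mul_le_mul_of_nonneg_right (coord_le_norm x i) (N_nonneg hN_add hN_smul _)
    _ = (∑ i, N (EuclideanSpace.single i (1 : ℝ))) * ‖x‖ := by
        rw [Finset.sum_mul]; simp [mul_comm]
section aux2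
variable {k : ℕ} {N : EuclideanSpace ℝ (Fin k) → ℝ}

lemma N_continuous (hN_add : ∀ x y, N (x + y) ≤ N x + N y)
    (hN_smul : ∀ (c : ℝ) (x), N (c • x) = |c| * N x) : Continuous N := by
  obtain ⟨Cu, hCu0, hCu⟩ := N_upper hN_add hN_smul
  have key : ∀ x y : EuclideanSpace ℝ (Fin k), N x - N y ≤ Cu * ‖x - y‖ := by
    intro x y
    have h1 : N x ≤ N y + N (x - y) := by
      have := hN_add y (x - y); simpa using this
    have := hCu (x - y); linarith
  rw [Metric.continuous_iff]
  intro x ε hε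
  refine ⟨ε / (Cu + 1), by positivity, fun y hy => ?_⟩
  rw [Real.dist_eq, abs_sub_lt_iff]
  have h1 := key y x
  have h2 := key x y
  have hd : ‖y - x‖ < ε / (Cu + 1) := by rwa [dist_eq_norm] at hy
  have hd' : ‖x - y‖ = ‖y - x‖ := norm_sub_rev _ _
  have : Cu * ‖y - x‖ < ε := by
    calc Cu * ‖y - x‖ ≤ (Cu + 1) * ‖y - x‖ := by nlinarith [norm_nonneg (y - x)]
      _ < (Cu + 1) * (ε / (Cu + 1)) := by
          apply mul_lt_mul_of_pos_left hd (by positivity)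
      _ = ε := by field_simp
  constructor <;> nlinarith [hd'.symm ▸ this]

lemma N_lower (hk : 1 ≤ k) (hN_add : ∀ x y, N (x + y) ≤ N x + N y)
    (hN_smul : ∀ (c : ℝ) (x), N (c • x) = |c| * N x)
    (hN_zero : ∀ x, N x = 0 ↔ x = 0) :
    ∃ c : ℝ, 0 < c ∧ ∀ x, c * ‖x‖ ≤ N x := by
  have hcont : Continuous N := N_continuous hN_add hN_smul
  have hcomp : IsCompact (Metric.sphere (0 : EuclideanSpace ℝ (Fin k)) 1) :=
    isCompact_sphere 0 1
  have hne : (Metric.sphere (0 : EuclideanSpace ℝ (Fin k)) 1).Nonempty := by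
    refine ⟨EuclideanSpace.single ⟨0, hk⟩ (1 : ℝ), ?_⟩
    simp [EuclideanSpace.norm_single]
  obtain ⟨x₀, hx₀mem, hx₀min⟩ := hcomp.exists_isMinOn hne hcont.continuousOn
  have hx₀norm : ‖x₀‖ = 1 := by simpa using hx₀mem
  have hx₀ne : x₀ ≠ 0 := by intro h; rw [h] at hx₀norm; simp at hx₀norm
  have hc : 0 < N x₀ := by
    rcases lt_or_eq_of_le (N_nonneg hN_add hN_smul x₀) with h | h
    · exact h
    · exact absurd ((hN_zero x₀).1 h.symm) hx₀ne
  refine ⟨N x₀, hc, fun x => ?_⟩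
  rcases eq_or_ne x 0 with rfl | hx
  · simp [(hN_zero 0).2 rfl]
  · have hxn : (0:ℝ) < ‖x‖ := norm_pos_iff.2 hx
    have hmem : ‖x‖⁻¹ • x ∈ Metric.sphere (0 : EuclideanSpace ℝ (Fin k)) 1 := by
      simp [norm_smul, abs_of_nonneg (le_of_lt (inv_pos.2 hxn)), inv_mul_cancel₀ hxn.ne']
    have h2 : N x₀ ≤ N (‖x‖⁻¹ • x) := hx₀min hmem
    have hNs : N (‖x‖⁻¹ • x) = ‖x‖⁻¹ * N x := by
      rw [hN_smul]; rw [abs_of_nonneg (le_of_lt (inv_pos.2 hxn))]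
    rw [hNs] at h2
    have h3 : N x₀ * ‖x‖ ≤ (‖x‖⁻¹ * N x) * ‖x‖ := mul_le_mul_of_nonneg_right h2 hxn.le
    calc N x₀ * ‖x‖ ≤ (‖x‖⁻¹ * N x) * ‖x‖ := h3
      _ = N x := by field_simp
end aux2


section dual
variable {k : ℕ} {N : EuclideanSpace ℝ (Fin k) → ℝ} {c : ℝ}

lemma dualSet_nonempty (hN_smul : ∀ (c : ℝ) (x), N (c • x) = |c| * N x)
    (v : EuclideanSpace ℝ (Fin k)) :
    ((fun Δ : EuclideanSpace ℝ (Fin k) => ⟪Δ, v⟫) '' {Δ | N Δ ≤ 1}).Nonempty :=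
  ⟨⟪(0 : EuclideanSpace ℝ (Fin k)), v⟫, ⟨0, by simp [Set.mem_setOf_eq, N_zero' hN_smul], rfl⟩⟩

lemma dualSet_bddAbove (hc : 0 < c) (hlow : ∀ x, c * ‖x‖ ≤ N x)
    (v : EuclideanSpace ℝ (Fin k)) :
    BddAbove ((fun Δ : EuclideanSpace ℝ (Fin k) => ⟪Δ, v⟫) '' {Δ | N Δ ≤ 1}) := by
  refine ⟨c⁻¹ * ‖v‖, ?_⟩
  rintro a ⟨Δ, hΔ, rfl⟩
  have h1 : ‖Δ‖ ≤ c⁻¹ := by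
    have := (hlow Δ).trans hΔ
    rw [inv_eq_one_div, le_div_iff₀ hc]; linarith
  calc ⟪Δ, v⟫ ≤ ‖Δ‖ * ‖v‖ := real_inner_le_norm Δ v
    _ ≤ c⁻¹ * ‖v‖ := mul_le_mul_of_nonneg_right h1 (norm_nonneg v)

lemma le_dualNorm (hc : 0 < c) (hlow : ∀ x, c * ‖x‖ ≤ N x)
    {Δ v : EuclideanSpace ℝ (Fin k)} (hΔ : N Δ ≤ 1) : ⟪Δ, v⟫ ≤ dualNorm N v :=
  le_csSup (dualSet_bddAbove hc hlow v) ⟨Δ, hΔ, rfl⟩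

lemma dualNorm_le (hN_smul : ∀ (c : ℝ) (x), N (c • x) = |c| * N x)
    {v : EuclideanSpace ℝ (Fin k)} {b : ℝ}
    (h : ∀ Δ, N Δ ≤ 1 → ⟪Δ, v⟫ ≤ b) : dualNorm N v ≤ b :=
  csSup_le (dualSet_nonempty hN_smul v) (by rintro a ⟨Δ, hΔ, rfl⟩; exact h Δ hΔ)

lemma dualNorm_nonneg (hN_smul : ∀ (c : ℝ) (x), N (c • x) = |c| * N x)
    (hc : 0 < c) (hlow : ∀ x, c * ‖x‖ ≤ N x) (v : EuclideanSpace ℝ (Fin k)) :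
    0 ≤ dualNorm N v := by
  have : ⟪(0 : EuclideanSpace ℝ (Fin k)), v⟫ ≤ dualNorm N v :=
    le_dualNorm hc hlow (by simp [N_zero' hN_smul])
  simpa using this

lemma dualNorm_le_norm (hN_smul : ∀ (c : ℝ) (x), N (c • x) = |c| * N x)
    (hc : 0 < c) (hlow : ∀ x, c * ‖x‖ ≤ N x) (v : EuclideanSpace ℝ (Fin k)) :
    dualNorm N v ≤ c⁻¹ * ‖v‖ := by
  refine dualNorm_le hN_smul fun Δ hΔ => ?_
  have h1 : ‖Δ‖ ≤ c⁻¹ := by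
    have := (hlow Δ).trans hΔ
    rw [inv_eq_one_div, le_div_iff₀ hc]; linarith
  calc ⟪Δ, v⟫ ≤ ‖Δ‖ * ‖v‖ := real_inner_le_norm Δ v
    _ ≤ c⁻¹ * ‖v‖ := mul_le_mul_of_nonneg_right h1 (norm_nonneg v)

lemma dualNorm_add_le (hN_smul : ∀ (c : ℝ) (x), N (c • x) = |c| * N x)
    (hc : 0 < c) (hlow : ∀ x, c * ‖x‖ ≤ N x) (u v : EuclideanSpace ℝ (Fin k)) :
    dualNorm N (u + v) ≤ dualNorm N u + dualNorm N v := by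
  refine dualNorm_le hN_smul fun Δ hΔ => ?_
  rw [inner_add_right]
  exact add_le_add (le_dualNorm hc hlow hΔ) (le_dualNorm hc hlow hΔ)

lemma dualNorm_smul_le (hN_smul : ∀ (c : ℝ) (x), N (c • x) = |c| * N x)
    (hc : 0 < c) (hlow : ∀ x, c * ‖x‖ ≤ N x) {a : ℝ} (ha : 0 ≤ a)
    (v : EuclideanSpace ℝ (Fin k)) :
    dualNorm N (a • v) ≤ a * dualNorm N v := by
  refine dualNorm_le hN_smul fun Δ hΔ => ?_
  rw [real_inner_smul_right]
  exact mul_le_mul_of_nonneg_left (le_dualNorm hc hlow hΔ) ha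

lemma dualNorm_sub_continuous (hN_smul : ∀ (c : ℝ) (x), N (c • x) = |c| * N x)
    (hc : 0 < c) (hlow : ∀ x, c * ‖x‖ ≤ N x) (tbar : EuclideanSpace ℝ (Fin k)) :
    Continuous (fun s : EuclideanSpace ℝ (Fin k) => dualNorm N (tbar - s)) := by
  have key : ∀ x y : EuclideanSpace ℝ (Fin k),
      dualNorm N (tbar - x) - dualNorm N (tbar - y) ≤ c⁻¹ * ‖x - y‖ := by
    intro x y
    have h1 : dualNorm N (tbar - x) ≤ dualNorm N (tbar - y) + dualNorm N (y - x) := by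
      have he : tbar - x = (tbar - y) + (y - x) := by abel
      rw [he]; exact dualNorm_add_le hN_smul hc hlow _ _
    have h2 : dualNorm N (y - x) ≤ c⁻¹ * ‖y - x‖ := dualNorm_le_norm hN_smul hc hlow _
    rw [norm_sub_rev y x] at h2
    linarith
  rw [Metric.continuous_iff]
  intro x ε hε
  refine ⟨ε / (c⁻¹ + 1), by positivity, fun y hy => ?_⟩
  rw [Real.dist_eq, abs_sub_lt_iff]
  have h1 := key y x
  have h2 := key x y
  have hd : ‖y - x‖ < ε / (c⁻¹ + 1) := by rwa [dist_eq_norm] at hy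
  have hd' : ‖x - y‖ = ‖y - x‖ := norm_sub_rev _ _
  have hci : (0:ℝ) < c⁻¹ + 1 := by positivity
  have hmain : c⁻¹ * ‖y - x‖ < ε := by
    calc c⁻¹ * ‖y - x‖ ≤ (c⁻¹ + 1) * ‖y - x‖ := by nlinarith [norm_nonneg (y - x)]
      _ < (c⁻¹ + 1) * (ε / (c⁻¹ + 1)) := mul_lt_mul_of_pos_left hd hci
      _ = ε := by field_simp
  constructor <;> nlinarith [hd'.symm ▸ hmain]
end dual

section norming
variable {k : ℕ} {N : EuclideanSpace ℝ (Fin k) → ℝ} {c : ℝ}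

/-- Existence of a norming functional: for `w ≠ 0` there is `v` with `N#(v) ≤ 1`
and `⟪v, w⟫ = N w`. -/
lemma exists_norming (hN_add : ∀ x y, N (x + y) ≤ N x + N y)
    (hN_smul : ∀ (c : ℝ) (x), N (c • x) = |c| * N x)
    (hN_zero : ∀ x, N x = 0 ↔ x = 0)
    (hc : 0 < c) (hlow : ∀ x, c * ‖x‖ ≤ N x)
    {w : EuclideanSpace ℝ (Fin k)} (hw : w ≠ 0) :
    ∃ v, dualNorm N v ≤ 1 ∧ ⟪v, w⟫ = N w := by
  have hNw : 0 < N w := by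
    rcases lt_or_eq_of_le (N_nonneg hN_add hN_smul w) with h | h
    · exact h
    · exact absurd ((hN_zero w).1 h.symm) hw
  set s : Set (EuclideanSpace ℝ (Fin k)) := {x | N x < 1} with hs
  have hsconv : Convex ℝ s := by
    intro x hx y hy a b ha hb hab
    have : N (a • x + b • y) ≤ a * N x + b * N y := by
      calc N (a • x + b • y) ≤ N (a • x) + N (b • y) := hN_add _ _
        _ = a * N x + b * N y := by rw [hN_smul, hN_smul, abs_of_nonneg ha, abs_of_nonneg hb]
    have hx' : N x < 1 := hx
    have hy' : N y < 1 := hy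
    have key2 : a * N x + b * N y < 1 := by
      rcases lt_or_eq_of_le ha with ha' | ha'
      · nlinarith [N_nonneg hN_add hN_smul y]
      · have ha0 : a = 0 := ha'.symm
        have hb1 : b = 1 := by linarith
        rw [ha0, hb1]; nlinarith
    show N (a • x + b • y) < 1
    linarith
  have hsopen : IsOpen s := isOpen_lt (N_continuous hN_add hN_smul) continuous_const
  set x₀ : EuclideanSpace ℝ (Fin k) := (N w)⁻¹ • w with hx₀
  have hNx₀ : N x₀ = 1 := by
    rw [hx₀, hN_smul, abs_of_nonneg (inv_nonneg.2 hNw.le), inv_mul_cancel₀ hNw.ne']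
  have hx₀s : x₀ ∉ s := by simp [hs, hNx₀]
  obtain ⟨f, hf⟩ := geometric_hahn_banach_open_point hsconv hsopen hx₀s
  have h0s : (0 : EuclideanSpace ℝ (Fin k)) ∈ s := by
    simp [hs, N_zero' hN_smul]
  have hfx₀pos : 0 < f x₀ := by
    have := hf 0 h0s; simpa using this
  -- all Δ in the closed unit N-ball satisfy f Δ ≤ f x₀
  have hball : ∀ Δ, N Δ ≤ 1 → f Δ ≤ f x₀ := by
    intro Δ hΔ
    by_contra h
    push_neg at h
    have hfΔ : 0 < f Δ := hfx₀pos.trans h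
    set θ : ℝ := f x₀ / f Δ with hθ
    have hθ0 : 0 < θ := div_pos hfx₀pos hfΔ
    have hθ1 : θ < 1 := (div_lt_one hfΔ).2 h
    have hmem : θ • Δ ∈ s := by
      have : N (θ • Δ) = θ * N Δ := by rw [hN_smul, abs_of_nonneg hθ0.le]
      have h2 : θ * N Δ ≤ θ * 1 := mul_le_mul_of_nonneg_left hΔ hθ0.le
      simp only [hs, Set.mem_setOf_eq, this]
      linarith
    have := hf _ hmem
    rw [map_smul, smul_eq_mul, hθ, div_mul_cancel₀ _ hfΔ.ne'] at this
    exact lt_irrefl _ this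
  set v : EuclideanSpace ℝ (Fin k) := (InnerProductSpace.toDual ℝ _).symm f with hv
  have hvx : ∀ x, ⟪v, x⟫ = f x := fun x => InnerProductSpace.toDual_symm_apply
  refine ⟨(f x₀)⁻¹ • v, ?_, ?_⟩
  · refine dualNorm_le hN_smul fun Δ hΔ => ?_
    rw [real_inner_smul_right, real_inner_comm, hvx]
    have := hball Δ hΔ
    calc (f x₀)⁻¹ * f Δ ≤ (f x₀)⁻¹ * f x₀ :=
          mul_le_mul_of_nonneg_left this (inv_nonneg.2 hfx₀pos.le)
      _ = 1 := inv_mul_cancel₀ hfx₀pos.ne'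
  · have hwx₀ : w = N w • x₀ := by
      rw [hx₀, smul_smul, mul_inv_cancel₀ hNw.ne', one_smul]
    have hfw : f w = N w * f x₀ := by
      conv_lhs => rw [hwx₀]
      rw [map_smul, smul_eq_mul]
    rw [real_inner_smul_left, hvx, hfw]
    field_simp
end norming

/-- Minimax representation of the dual-norm distance from `t̄` to the polytope
`C = conv{t_1, …, t_n}`:
`λ# = min_{t ∈ C} N#(t̄ - t) = max { min_j ⟪Δ, t̄ - t_j⟫ : N(Δ) ≤ 1 }`,
with both the minimum and the maximum attained. -/
theorem dual_dist_minimax {k n : ℕ} (hk : 1 ≤ k) (hn : 1 ≤ n)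
    (tbar : EuclideanSpace ℝ (Fin k)) (t : Fin n → EuclideanSpace ℝ (Fin k))
    (N : EuclideanSpace ℝ (Fin k) → ℝ)
    (hN_add : ∀ x y, N (x + y) ≤ N x + N y)
    (hN_smul : ∀ (c : ℝ) (x), N (c • x) = |c| * N x)
    (hN_zero : ∀ x, N x = 0 ↔ x = 0) :
    ∃ lam : ℝ,
      IsLeast ((fun s => dualNorm N (tbar - s)) '' convexHull ℝ (Set.range t)) lam ∧
      IsGreatest
        ((fun Δ : EuclideanSpace ℝ (Fin k) =>
            Finset.univ.inf' (Finset.univ_nonempty_iff.mpr (Fin.pos_iff_nonempty.mp hn))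
              (fun j => ⟪Δ, tbar - t j⟫)) '' {Δ | N Δ ≤ 1})
        lam := by
  obtain ⟨c, hc, hlow⟩ := N_lower hk hN_add hN_smul hN_zero
  have hCcomp : IsCompact (convexHull ℝ (Set.range t)) :=
    (Set.finite_range t).isCompact_convexHull ℝ
  let j0 : Fin n := ⟨0, hn⟩
  have hCne : (convexHull ℝ (Set.range t)).Nonempty :=
    ⟨t j0, subset_convexHull ℝ _ ⟨j0, rfl⟩⟩
  have hcont := dualNorm_sub_continuous hN_smul hc hlow tbar
  obtain ⟨s₀, hs₀C, hmin⟩ := hCcomp.exists_isMinOn hCne hcont.continuousOn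
  set lam := dualNorm N (tbar - s₀) with hlam
  have hlam0 : 0 ≤ lam := dualNorm_nonneg hN_smul hc hlow _
  have hne : Finset.univ.Nonempty :=
    (Finset.univ_nonempty_iff.mpr (Fin.pos_iff_nonempty.mp hn))
  -- (a) upper bound for the max side
  have hub : ∀ Δ : EuclideanSpace ℝ (Fin k), N Δ ≤ 1 →
      (Finset.univ.inf' hne fun j => ⟪Δ, tbar - t j⟫) ≤ lam := by
    intro Δ hΔ
    set m := Finset.univ.inf' hne fun j => ⟪Δ, tbar - t j⟫ with hm
    have hhalf : convexHull ℝ (Set.range t) ⊆ {s | ⟪Δ, s⟫ ≤ ⟪Δ, tbar⟫ - m} := by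
      apply convexHull_min
      · rintro _ ⟨j, rfl⟩
        have h1 : m ≤ ⟪Δ, tbar - t j⟫ := Finset.inf'_le _ (Finset.mem_univ j)
        rw [inner_sub_right] at h1
        show ⟪Δ, t j⟫ ≤ ⟪Δ, tbar⟫ - m
        linarith
      · exact convex_halfSpace_le
          ⟨fun a b => inner_add_right Δ a b,
           fun r a => by rw [real_inner_smul_right]; simp⟩ _
    have h2 : ⟪Δ, s₀⟫ ≤ ⟪Δ, tbar⟫ - m := hhalf hs₀C
    have h3 : ⟪Δ, tbar - s₀⟫ ≤ lam := le_dualNorm hc hlow hΔ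
    rw [inner_sub_right] at h3
    linarith
  -- (b) find a maximizer Δ₀ with value lam
  obtain ⟨Δ₀, hNΔ₀, hval⟩ : ∃ Δ₀ : EuclideanSpace ℝ (Fin k), N Δ₀ ≤ 1 ∧
      (Finset.univ.inf' hne fun j => ⟪Δ₀, tbar - t j⟫) = lam := by
    rcases eq_or_lt_of_le hlam0 with hlam_eq | hlam_pos
    · refine ⟨0, by simp [N_zero' hN_smul], ?_⟩
      simp only [inner_zero_left]
      rw [Finset.inf'_const]
      exact hlam_eq
    · set B : Set (EuclideanSpace ℝ (Fin k)) := {x | dualNorm N (tbar - x) < lam} with hB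
      have hBopen : IsOpen B := isOpen_lt hcont continuous_const
      have hBconv : Convex ℝ B := by
        intro x hx y hy a b ha hb hab
        have hxy : tbar - (a • x + b • y) = a • (tbar - x) + b • (tbar - y) := by
          have h1 : a • (tbar - x) + b • (tbar - y)
              = (a + b) • tbar - (a • x + b • y) := by module
          rw [h1, hab, one_smul]
        show dualNorm N (tbar - (a • x + b • y)) < lam
        rw [hxy]
        have h2 := dualNorm_add_le hN_smul hc hlow (a • (tbar - x)) (b • (tbar - y))
        have h3 := dualNorm_smul_le hN_smul hc hlow ha (tbar - x)
        have h4 := dualNorm_smul_le hN_smul hc hlow hb (tbar - y)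
        have hx' : dualNorm N (tbar - x) < lam := hx
        have hy' : dualNorm N (tbar - y) < lam := hy
        have hD0x := dualNorm_nonneg hN_smul hc hlow (tbar - x)
        have hD0y := dualNorm_nonneg hN_smul hc hlow (tbar - y)
        have hmax : a * dualNorm N (tbar - x) + b * dualNorm N (tbar - y) < lam := by
          rcases lt_or_eq_of_le ha with ha' | ha'
          · nlinarith
          · have ha0 : a = 0 := ha'.symm
            have hb1 : b = 1 := by linarith
            rw [ha0, hb1]; simpa using hy'
        linarith
      have hdisj : Disjoint B (convexHull ℝ (Set.range t)) := by
        rw [Set.disjoint_left]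
        intro x hxB hxC
        have h1 : dualNorm N (tbar - x) < lam := hxB
        have h2 : lam ≤ dualNorm N (tbar - x) := isMinOn_iff.mp hmin x hxC
        linarith
      obtain ⟨f, u, hfB, hfC⟩ :=
        geometric_hahn_banach_open hBconv hBopen (convex_convexHull ℝ _) hdisj
      have htbarB : tbar ∈ B := by
        show dualNorm N (tbar - tbar) < lam
        rw [sub_self]
        have h1 := dualNorm_le_norm hN_smul hc hlow (0 : EuclideanSpace ℝ (Fin k))
        simp only [norm_zero, mul_zero] at h1
        linarith
      set w : EuclideanSpace ℝ (Fin k) := (InnerProductSpace.toDual ℝ _).symm f with hwdef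
      have hwx : ∀ x, ⟪w, x⟫ = f x := fun x => InnerProductSpace.toDual_symm_apply
      have hwne : w ≠ 0 := by
        intro h
        have h1 : f tbar = 0 := by rw [← hwx, h, inner_zero_left]
        have h2 := hfB tbar htbarB
        have h3 := hfC (t j0) (subset_convexHull ℝ _ ⟨j0, rfl⟩)
        have h4 : f (t j0) = 0 := by rw [← hwx, h, inner_zero_left]
        rw [h1] at h2; rw [h4] at h3; linarith
      set w' : EuclideanSpace ℝ (Fin k) := -w with hw'def
      have hw'ne : w' ≠ 0 := neg_ne_zero.2 hwne
      have hNw' : 0 < N w' := by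
        rcases lt_or_eq_of_le (N_nonneg hN_add hN_smul w') with h | h
        · exact h
        · exact absurd ((hN_zero w').1 h.symm) hw'ne
      set c₀ : ℝ := u - f tbar with hc₀
      have hw'app : ∀ z, ⟪w', z⟫ = -(f z) := by
        intro z; rw [hw'def, inner_neg_left, hwx]
      have hzbound : ∀ z, dualNorm N z < lam → ⟪w', z⟫ < c₀ := by
        intro z hz
        have hmem : tbar - z ∈ B := by
          show dualNorm N (tbar - (tbar - z)) < lam
          rw [sub_sub_cancel]; exact hz
        have h1 := hfB _ hmem
        rw [map_sub] at h1
        rw [hw'app]; rw [hc₀]; linarith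
      obtain ⟨v₁, hv₁, hv₁w⟩ := exists_norming hN_add hN_smul hN_zero hc hlow hw'ne
      have hkey : lam * N w' ≤ c₀ := by
        by_contra h
        push_neg at h
        set ε : ℝ := min (lam / 2) ((lam * N w' - c₀) / (2 * N w')) with hε
        have hd0 : 0 < lam * N w' - c₀ := by linarith
        have hε0 : 0 < ε := lt_min (by linarith) (by positivity)
        have hεlam : ε < lam := lt_of_le_of_lt (min_le_left _ _) (by linarith)
        have hz : dualNorm N ((lam - ε) • v₁) < lam := by
          have h1 := dualNorm_smul_le hN_smul hc hlow
            (by linarith : (0:ℝ) ≤ lam - ε) v₁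
          have h2 : (lam - ε) * dualNorm N v₁ ≤ (lam - ε) * 1 :=
            mul_le_mul_of_nonneg_left hv₁ (by linarith)
          linarith
        have h3 := hzbound _ hz
        rw [real_inner_smul_right, real_inner_comm, hv₁w] at h3
        have h5 : ε * (2 * N w') ≤ lam * N w' - c₀ :=
          (le_div_iff₀ (by positivity : (0:ℝ) < 2 * N w')).mp (min_le_right _ _)
        nlinarith [mul_pos hε0 hNw']
      set Δ₀ : EuclideanSpace ℝ (Fin k) := (N w')⁻¹ • w' with hΔ₀def
      have hNΔ₀ : N Δ₀ = 1 := by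
        rw [hΔ₀def, hN_smul, abs_of_nonneg (inv_nonneg.2 hNw'.le),
          inv_mul_cancel₀ hNw'.ne']
      have hlow_j : ∀ j, lam ≤ ⟪Δ₀, tbar - t j⟫ := by
        intro j
        have h1 : u ≤ f (t j) := hfC _ (subset_convexHull ℝ _ ⟨j, rfl⟩)
        have h2 : c₀ ≤ ⟪w', tbar - t j⟫ := by
          rw [hw'app, map_sub, hc₀]; linarith
        have h3 : ⟪Δ₀, tbar - t j⟫ = (N w')⁻¹ * ⟪w', tbar - t j⟫ := by
          rw [hΔ₀def, real_inner_smul_left]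
        rw [h3]
        calc lam = (N w')⁻¹ * (lam * N w') := by field_simp
          _ ≤ (N w')⁻¹ * ⟪w', tbar - t j⟫ :=
            mul_le_mul_of_nonneg_left (hkey.trans h2) (inv_nonneg.2 hNw'.le)
      exact ⟨Δ₀, hNΔ₀.le,
        le_antisymm (hub Δ₀ hNΔ₀.le) (Finset.le_inf' _ _ fun j _ => hlow_j j)⟩
  exact ⟨lam,
    ⟨⟨s₀, hs₀C, rfl⟩, by rintro x ⟨s, hsC, rfl⟩; exact isMinOn_iff.mp hmin s hsC⟩,
    ⟨⟨Δ₀, hNΔ₀, hval⟩, by rintro x ⟨Δ, hΔ, rfl⟩; exact hub Δ hΔ⟩⟩
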